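/- The T-graphs T_{π*_6}, T_{π*_8}, T_{π*_10}, ... form an infinite antichain with respect to the induced subgraph relation: for all even m, n with 6 ≤ m < n, the graph T_{π*_m} is not isomorphic to an induced subgraph of T_{π*_n}. -/

import Mathlib

set_option maxRecDepth 8000


/-- `H` is (isomorphic to) an induced subgraph of `G`. -/
def IsInducedSubgraph {α β : Type*} (H : SimpleGraph α) (G : SimpleGraph β) : Prop :=
  ∃ f : α → β, Function.Injective f ∧ ∀ u v, G.Adj (f u) (f v) ↔ H.Adj u v

/-- `H` is (isomorphic to) a not necessarily induced subgraph of `G`. -/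
def IsSubgraphOf {α β : Type*} (H : SimpleGraph α) (G : SimpleGraph β) : Prop :=
  ∃ f : α → β, Function.Injective f ∧ ∀ u v, H.Adj u v → G.Adj (f u) (f v)

/-- `G` contains no induced subgraph isomorphic to `H`. -/
def HFree {α β : Type*} (H : SimpleGraph α) (G : SimpleGraph β) : Prop :=
  ¬ IsInducedSubgraph H G

/-- A graph is bipartite if its vertex set splits into two independent sets. -/
def IsBipartite {V : Type*} (G : SimpleGraph V) : Prop :=
  ∃ c : V → Bool, ∀ u v, G.Adj u v → c u ≠ c v

/-- The chordless path `P_k` on `k` vertices. -/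
def pathN (k : ℕ) : SimpleGraph (Fin k) :=
  SimpleGraph.fromRel (fun u v => u.val + 1 = v.val)

/-- The chordless cycle `C_4`. -/
def c4 : SimpleGraph (Fin 4) :=
  SimpleGraph.fromRel (fun u v => (u.val, v.val) ∈ [(0,1),(1,2),(2,3),(3,0)])

/-- `Sun_1`: a `C_4` (on 0,1,2,3) with one pendant vertex 4 attached to 0. -/
def sun1 : SimpleGraph (Fin 5) :=
  SimpleGraph.fromRel (fun u v => (u.val, v.val) ∈ [(0,1),(1,2),(2,3),(3,0),(0,4)])

/-- `Sun_4`: a `C_4` (on 0,1,2,3) with pendant vertices 4,5,6,7 attached to 0,1,2,3. -/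
def sun4 : SimpleGraph (Fin 8) :=
  SimpleGraph.fromRel (fun u v =>
    (u.val, v.val) ∈ [(0,1),(1,2),(2,3),(3,0),(0,4),(1,5),(2,6),(3,7)])

/-- `2P_3`: the disjoint union of two chordless paths on 3 vertices. -/
def twoP3 : SimpleGraph (Fin 6) :=
  SimpleGraph.fromRel (fun u v => (u.val, v.val) ∈ [(0,1),(1,2),(3,4),(4,5)])

/-- `S_{1,2,3}`: the 7-vertex tree with one degree-3 vertex (vertex 0) whose three
leaves (1, 3, 6) are at distances 1, 2 and 3 from it. -/
def s123 : SimpleGraph (Fin 7) :=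
  SimpleGraph.fromRel (fun u v => (u.val, v.val) ∈ [(0,1),(0,2),(2,3),(0,4),(4,5),(5,6)])

/-- The bipartite complement of `P_8` (vertices `0..7`, path edges `i (i+1)`,
parts = even vertices / odd vertices): an even and an odd vertex are adjacent
iff they are not consecutive. -/
def p8tilde : SimpleGraph (Fin 8) :=
  SimpleGraph.fromRel (fun u v =>
    u.val % 2 = 0 ∧ v.val % 2 = 1 ∧ u.val + 1 ≠ v.val ∧ v.val + 1 ≠ u.val)

/-- The T-graph `T_π` for a permutation (given as a map) `π` of `Fin n`.
Vertices: `A ⊕ B ⊕ C ⊕ D`, with edges exactly: `a_i b_{π(i)}`; all `c_i d_j`;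
`a_i d_j` for `j ≤ i`; `b_i c_j` for `j ≤ i`. -/
def Tgraph {n : ℕ} (π : Fin n → Fin n) : SimpleGraph (Fin n ⊕ Fin n ⊕ Fin n ⊕ Fin n) :=
  SimpleGraph.fromRel (fun u v =>
    match u, v with
    | Sum.inl i, Sum.inr (Sum.inl j) => π i = j
    | Sum.inr (Sum.inr (Sum.inl _)), Sum.inr (Sum.inr (Sum.inr _)) => True
    | Sum.inl i, Sum.inr (Sum.inr (Sum.inr j)) => j ≤ i
    | Sum.inr (Sum.inl i), Sum.inr (Sum.inr (Sum.inl j)) => j ≤ i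
    | _, _ => False)

/-- The S-graph for witnessing (convex) permutations `μ, ρ` of a biconvex
permutation `π = μ ∘ ρ⁻¹`. Vertices: `A ⊕ B ⊕ C`, edges exactly:
`b_i a_j` for `j ≤ ρ(i)` and `b_i c_j` for `j ≤ μ(i)`. -/
def Sgraph {n : ℕ} (μ ρ : Fin n → Fin n) : SimpleGraph (Fin n ⊕ Fin n ⊕ Fin n) :=
  SimpleGraph.fromRel (fun u v =>
    match u, v with
    | Sum.inr (Sum.inl i), Sum.inl j => j ≤ ρ i
    | Sum.inr (Sum.inl i), Sum.inr (Sum.inr j) => j ≤ μ i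
    | _, _ => False)

/-- The permutation graph of `π`: `i ~ j` iff `(i - j)(π(i) - π(j)) < 0`. -/
def permGraph {n : ℕ} (π : Fin n → Fin n) : SimpleGraph (Fin n) :=
  SimpleGraph.fromRel (fun u v => u < v ∧ π v < π u)

/-- The universal graph `H_{k,n}`: vertex `(i,j)` is adjacent to `(i+1,j')` iff `j' ≤ j`. -/
def Hgraph (k n : ℕ) : SimpleGraph (Fin k × Fin n) :=
  SimpleGraph.fromRel (fun u v => v.1.val = u.1.val + 1 ∧ v.2.val ≤ u.2.val)

/-- Pattern containment of (one-line) sequences: `π` is contained in `ρ` if `ρ` has a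
subsequence order-isomorphic to `π`. -/
def Contained {m n : ℕ} (π : Fin m → ℕ) (ρ : Fin n → ℕ) : Prop :=
  ∃ f : Fin m → Fin n, StrictMono f ∧ ∀ i j, π i ≤ π j ↔ ρ (f i) ≤ ρ (f j)

/-- Value at (1-indexed) position `p` of the one-line notation of the permutation
`π*_n = (4, 2, 6, 1, 8, 3, …, 2j, 2j−5, …, n−1, n−3)` of Section 2.1. -/
def pistarVal (n p : ℕ) : ℕ :=
  if p = 1 then 4
  else if p = 2 then 2
  else if p = n - 1 then n - 1
  else if p = n then n - 3
  else if p % 2 = 1 then p + 3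
  else p - 3

/-- `π*_n` of Section 2.1 as a (0-indexed) sequence of natural numbers. -/
def pistar (n : ℕ) : Fin n → ℕ := fun i => pistarVal n (i.val + 1)

/-- `π*_n` of Section 2.1 as a (0-indexed) map `Fin n → Fin n`. -/
def pistarFin (n : ℕ) : Fin n → Fin n :=
  fun i => ⟨(pistarVal n (i.val + 1) - 1) % n, Nat.mod_lt _ i.pos⟩

/-- Value at (1-indexed) position `p` of the one-line notation of the permutation
`π*_n = (2, 3, 5, 1, …, 2j+3, 2j, …, n, n−4, n−1, n−2)` of Section 2.2. -/
def pi2starVal (n p : ℕ) : ℕ :=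
  if p = 1 then 2
  else if p = 2 then 3
  else if p = 3 then 5
  else if p = 4 then 1
  else if p = n - 3 then n
  else if p = n - 2 then n - 4
  else if p = n - 1 then n - 1
  else if p = n then n - 2
  else if p % 2 = 1 then p + 2
  else p - 2

/-- `π*_n` of Section 2.2 as a (0-indexed) map `Fin n → Fin n`. -/
def pi2starFin (n : ℕ) : Fin n → Fin n :=
  fun i => ⟨(pi2starVal n (i.val + 1) - 1) % n, Nat.mod_lt _ i.pos⟩

/-- Value at (1-indexed) position `p` of the one-line notation of
`ρ*_n = (1, 2, 3, 5, …, n−3, n−1, n, n−2, …, 6, 4)`. -/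
def rhostarVal (n p : ℕ) : ℕ :=
  if p = 1 then 1
  else if p = 2 then 2
  else if p ≤ n / 2 + 1 then 2 * p - 3
  else if p = n / 2 + 2 then n
  else 2 * n - 2 * p + 4

/-- `ρ*_n` as a (0-indexed) map `Fin n → Fin n`. -/
def rhostarFin (n : ℕ) : Fin n → Fin n :=
  fun i => ⟨(rhostarVal n (i.val + 1) - 1) % n, Nat.mod_lt _ i.pos⟩

/-- Value at (1-indexed) position `p` of the one-line notation of
`μ*_n = (2, 3, 5, …, n−3, n, n−1, n−2, n−4, …, 6, 4, 1)`. -/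
def mustarVal (n p : ℕ) : ℕ :=
  if p = 1 then 2
  else if p ≤ n / 2 - 1 then 2 * p - 1
  else if p = n / 2 then n
  else if p = n / 2 + 1 then n - 1
  else if p ≤ n - 1 then 2 * n - 2 * p + 2
  else 1

/-- `μ*_n` as a (0-indexed) map `Fin n → Fin n`. -/
def mustarFin (n : ℕ) : Fin n → Fin n :=
  fun i => ⟨(mustarVal n (i.val + 1) - 1) % n, Nat.mod_lt _ i.pos⟩

/-- A map `ρ : Fin n → Fin n` is convex if for every `i` the set of positions `p`
with `i ≤ ρ p` is a set of consecutive elements. -/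
def IsConvexFun {n : ℕ} (ρ : Fin n → Fin n) : Prop :=
  ∀ i p q r : Fin n, p ≤ q → q ≤ r → i ≤ ρ p → i ≤ ρ r → i ≤ ρ q

/-- A graph is biconvex if it has a bipartition `(X, Xᶜ)` and a linear order
(induced by an injection into `ℕ`) on the vertices such that every neighborhood
of a vertex of `X` is an interval of `Xᶜ` and vice versa. -/
def IsBiconvex {V : Type*} (G : SimpleGraph V) : Prop :=
  ∃ (X : Set V) (f : V → ℕ), Function.Injective f ∧
    (∀ u v, G.Adj u v → (u ∈ X ↔ v ∉ X)) ∧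
    (∀ x ∈ X, ∀ u v w, u ∉ X → v ∉ X → w ∉ X → f u ≤ f v → f v ≤ f w →
      G.Adj x u → G.Adj x w → G.Adj x v) ∧
    (∀ y ∉ X, ∀ u v w, u ∈ X → v ∈ X → w ∈ X → f u ≤ f v → f v ≤ f w →
      G.Adj y u → G.Adj y w → G.Adj y v)

/-- `G` is a permutation graph: isomorphic to `permGraph π` for some permutation `π`. -/
def IsPermutationGraph {V : Type*} (G : SimpleGraph V) : Prop :=
  ∃ (n : ℕ) (π : Fin n → Fin n), Function.Bijective π ∧ Nonempty (G ≃g permGraph π)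

/-- `G` is a `k`-letter graph: there is a partition of the vertices into `p ≤ k`
classes, each a clique or an independent set, and a linear order (an injection
into `ℕ`) such that the edges between any two distinct classes form one of the
four prescribed patterns. -/
def IsKLetterGraph {V : Type*} (k : ℕ) (G : SimpleGraph V) : Prop :=
  ∃ (p : ℕ) (_ : p ≤ k) (P : V → Fin p) (L : V → ℕ), Function.Injective L ∧
    (∀ i : Fin p,
      (∀ u v, P u = i → P v = i → u ≠ v → G.Adj u v) ∨
      (∀ u v, P u = i → P v = i → ¬ G.Adj u v)) ∧
    (∀ i j : Fin p, i ≠ j →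
      (∀ u v, P u = i → P v = j → (G.Adj u v ↔ L u < L v)) ∨
      (∀ u v, P u = i → P v = j → (G.Adj u v ↔ L v < L u)) ∨
      (∀ u v, P u = i → P v = j → G.Adj u v) ∨
      (∀ u v, P u = i → P v = j → ¬ G.Adj u v))

/-- 0-indexed clean formula for `π*_n`. -/
def piN (n k : ℕ) : ℕ :=
  if k = 1 then 1 else if k = n-2 then n-2 else if k % 2 = 0 then k+3 else k-3

def MN (n x : ℕ) : ℕ := 2*n - 1 - piN n x

lemma piN_lt {n k : ℕ} (hn2 : n % 2 = 0) (hn6 : 6 ≤ n) (hk : k < n) : piN n k < n := by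
  simp only [piN]; split_ifs <;> omega

lemma pistarVal_eq {n k : ℕ} (hn2 : n % 2 = 0) (hn6 : 6 ≤ n) (hk : k < n) :
    pistarVal n (k+1) = piN n k + 1 := by
  simp only [pistarVal, piN]; split_ifs <;> omega

lemma pistarFin_val {n : ℕ} (hn2 : n % 2 = 0) (hn6 : 6 ≤ n) (i : Fin n) :
    ((pistarFin n i : Fin n) : ℕ) = piN n i.val := by
  have h1 := pistarVal_eq hn2 hn6 i.isLt
  have h2 := piN_lt hn2 hn6 i.isLt
  simp only [pistarFin, h1]
  simp [Nat.mod_eq_of_lt h2]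

lemma piN_invol {n k : ℕ} (hn2 : n % 2 = 0) (hn6 : 6 ≤ n) (hk : k < n) :
    piN n (piN n k) = k := by
  simp only [piN]; split_ifs <;> omega

lemma piN_one {n : ℕ} : piN n 1 = 1 := by simp [piN]
lemma piN_even {n q : ℕ} (hq : q % 2 = 0) (h1 : q ≠ 1) (h2 : q ≠ n - 2) : piN n q = q + 3 := by
  simp only [piN]; split_ifs <;> omega
lemma piN_odd {n q : ℕ} (hq : q % 2 = 1) (h3 : 3 ≤ q) (h2 : q ≠ n - 2) : piN n q = q - 3 := by
  simp only [piN]; split_ifs <;> omega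
lemma piN_top {n : ℕ} (hn6 : 6 ≤ n) : piN n (n-2) = n - 2 := by
  simp only [piN]; split_ifs <;> omega

lemma MN_ge {n x : ℕ} (hn2 : n % 2 = 0) (hn6 : 6 ≤ n) (hx : x < n) : n ≤ MN n x := by
  have := piN_lt hn2 hn6 hx; simp only [MN]; omega

lemma MN_lt {n x : ℕ} (hn6 : 6 ≤ n) : MN n x < 2*n := by
  simp only [MN, piN]; split_ifs <;> omega

lemma MN_gap {n x : ℕ} (hn2 : n % 2 = 0) (hn6 : 6 ≤ n) (hx : x < n) : x + 3 ≤ MN n x := by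
  simp only [MN, piN]; split_ifs <;> omega

lemma MN_inj {n x x' : ℕ} (hn2 : n % 2 = 0) (hn6 : 6 ≤ n) (hx : x < n) (hx' : x' < n)
    (h : MN n x = MN n x') : x = x' := by
  have h1 := piN_lt hn2 hn6 hx
  have h2 := piN_lt hn2 hn6 hx'
  have : piN n x = piN n x' := by simp only [MN] at h; omega
  have := piN_invol hn2 hn6 hx
  have := piN_invol hn2 hn6 hx'
  rw [← piN_invol hn2 hn6 hx, ‹piN n x = piN n x'›, piN_invol hn2 hn6 hx']

lemma MN_surj {n y : ℕ} (hn2 : n % 2 = 0) (hn6 : 6 ≤ n) (hy1 : n ≤ y) (hy2 : y < 2*n) :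
    ∃ x, x < n ∧ MN n x = y := by
  refine ⟨piN n (2*n-1-y), piN_lt hn2 hn6 (by omega), ?_⟩
  simp only [MN]
  rw [piN_invol hn2 hn6 (by omega)]
  omega

/-- anchor lemma -/
lemma piN_anchor {n x x' x'' : ℕ} (hn2 : n % 2 = 0) (hn6 : 6 ≤ n)
    (h1 : x' < x) (h2 : x < x'') (hx'' : x'' < n)
    (hA : piN n x < piN n x') (hB : piN n x'' < piN n x) : x = 1 ∨ x = n - 2 := by
  simp only [piN] at hA hB; split_ifs at hA hB <;> omega
abbrev VT (n : ℕ) := Fin n ⊕ Fin n ⊕ Fin n ⊕ Fin n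

def lV (n : ℕ) (hn : 0 < n) (x : ℕ) : VT n :=
  if h : x < n then Sum.inl ⟨x, h⟩ else Sum.inr (Sum.inr (Sum.inl ⟨2*n-1-x, by omega⟩))

def rV (n : ℕ) (hn : 0 < n) (y : ℕ) : VT n :=
  if h : y < n then Sum.inr (Sum.inr (Sum.inr ⟨y, h⟩)) else Sum.inr (Sum.inl ⟨2*n-1-y, by omega⟩)

def posV {n : ℕ} : VT n → ℕ
  | Sum.inl i => i
  | Sum.inr (Sum.inl i) => 2*n-1-i
  | Sum.inr (Sum.inr (Sum.inl t)) => 2*n-1-t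
  | Sum.inr (Sum.inr (Sum.inr t)) => t

def sideV {n : ℕ} : VT n → Bool
  | Sum.inl _ => false
  | Sum.inr (Sum.inl _) => true
  | Sum.inr (Sum.inr (Sum.inl _)) => false
  | Sum.inr (Sum.inr (Sum.inr _)) => true

lemma posV_lt {n : ℕ} (hn : 0 < n) (v : VT n) : posV v < 2*n := by
  rcases v with i | i | t | t <;> simp [posV] <;> omega

lemma posV_lV {n : ℕ} (hn : 0 < n) {x : ℕ} (hx : x < 2*n) : posV (lV n hn x) = x := by
  simp only [lV]; split_ifs with h <;> simp [posV] <;> omega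

lemma posV_rV {n : ℕ} (hn : 0 < n) {y : ℕ} (hy : y < 2*n) : posV (rV n hn y) = y := by
  simp only [rV]; split_ifs with h <;> simp [posV] <;> omega

lemma sideV_lV {n : ℕ} (hn : 0 < n) (x : ℕ) : sideV (lV n hn x) = false := by
  simp only [lV]; split_ifs <;> simp [sideV]

lemma sideV_rV {n : ℕ} (hn : 0 < n) (y : ℕ) : sideV (rV n hn y) = true := by
  simp only [rV]; split_ifs <;> simp [sideV]

lemma lV_posV {n : ℕ} (hn : 0 < n) {v : VT n} (h : sideV v = false) : lV n hn (posV v) = v := by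
  rcases v with i | i | t | t <;> simp [sideV] at h ⊢ <;> simp only [lV, posV]
  · exact dif_pos i.isLt
  · have ht : ¬ (2*n-1-t.val < n) := by have := t.isLt; omega
    refine (dif_neg ht).trans ?_
    have h2 : 2*n-1-(2*n-1-(t:ℕ)) = (t:ℕ) := by have := t.isLt; omega
    simp only [h2, Fin.eta]

lemma rV_posV {n : ℕ} (hn : 0 < n) {v : VT n} (h : sideV v = true) : rV n hn (posV v) = v := by
  rcases v with i | i | t | t <;> simp [sideV] at h ⊢ <;> simp only [rV, posV]
  · have ht : ¬ (2*n-1-i.val < n) := by have := i.isLt; omega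
    refine (dif_neg ht).trans ?_
    have h2 : 2*n-1-(2*n-1-(i:ℕ)) = (i:ℕ) := by have := i.isLt; omega
    simp only [h2, Fin.eta]
  · exact dif_pos t.isLt

lemma adj_side {n : ℕ} {u v : VT n} (h : (Tgraph (pistarFin n)).Adj u v) :
    sideV u ≠ sideV v := by
  rcases u with i | i | t | t <;> rcases v with j | j | s | s <;>
    simp [Tgraph, SimpleGraph.fromRel_adj, sideV] at h ⊢

lemma adj_ad {n : ℕ} {π : Fin n → Fin n} (i j : Fin n) :
    (Tgraph π).Adj (Sum.inl i) (Sum.inr (Sum.inr (Sum.inr j))) ↔ j ≤ i := by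
  simp [Tgraph, SimpleGraph.fromRel_adj]

lemma adj_ab {n : ℕ} {π : Fin n → Fin n} (i j : Fin n) :
    (Tgraph π).Adj (Sum.inl i) (Sum.inr (Sum.inl j)) ↔ π i = j := by
  simp [Tgraph, SimpleGraph.fromRel_adj]

lemma adj_cd {n : ℕ} {π : Fin n → Fin n} (i j : Fin n) :
    (Tgraph π).Adj (Sum.inr (Sum.inr (Sum.inl i))) (Sum.inr (Sum.inr (Sum.inr j))) := by
  simp [Tgraph, SimpleGraph.fromRel_adj]

lemma adj_cb {n : ℕ} {π : Fin n → Fin n} (i j : Fin n) :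
    (Tgraph π).Adj (Sum.inr (Sum.inr (Sum.inl i))) (Sum.inr (Sum.inl j)) ↔ i ≤ j := by
  simp [Tgraph, SimpleGraph.fromRel_adj]

lemma adj_lr {n : ℕ} (hn2 : n % 2 = 0) (hn6 : 6 ≤ n) (hn : 0 < n) {x y : ℕ}
    (hx : x < 2*n) (hy : y < 2*n) :
    (Tgraph (pistarFin n)).Adj (lV n hn x) (rV n hn y) ↔
      (y ≤ x ∨ (x < n ∧ y = MN n x)) := by
  simp only [lV, rV]
  split_ifs with h1 h2 h2
  · have := MN_ge hn2 hn6 h1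
    rw [adj_ad, Fin.mk_le_mk]
    omega
  · have hlt := piN_lt hn2 hn6 h1
    rw [adj_ab, Fin.ext_iff, pistarFin_val hn2 hn6]
    simp only [MN]
    omega
  · have := adj_cd (π := pistarFin n) (⟨2*n-1-x, by omega⟩ : Fin n) ⟨y, h2⟩
    constructor
    · intro _; left; omega
    · intro _; exact this
  · rw [adj_cb, Fin.mk_le_mk]
    have hMN := MN_ge hn2 hn6 (show 2*n-1-x < n from by omega)
    omega

lemma core {m n : ℕ} (hm2 : m % 2 = 0) (hn2 : n % 2 = 0) (hm6 : 6 ≤ m) (hmn : m < n)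
    (Φ Ψ : ℕ → ℕ)
    (hΨb : ∀ j, j < 2*m → Ψ j < 2*n)
    (hΦinj : ∀ i i', i < 2*m → i' < 2*m → Φ i = Φ i' → i = i')
    (hΨinj : ∀ j j', j < 2*m → j' < 2*m → Ψ j = Ψ j' → j = j')
    (KEY : ∀ i j, i < 2*m → j < 2*m →
      ((Ψ j ≤ Φ i ∨ (Φ i < n ∧ Ψ j = MN n (Φ i))) ↔ (j ≤ i ∨ (i < m ∧ j = MN m i)))) :
    False := by
  have hn6 : 6 ≤ n := by omega
  -- C1 : every source matched pair maps to a target matched pair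
  have C1 : ∀ i, i < m → Φ i < n ∧ Ψ (MN m i) = MN n (Φ i) := by
    intro i hi
    have hMm1 : m ≤ MN m i := MN_ge hm2 hm6 hi
    have hMm2 : MN m i < 2*m := MN_lt hm6
    have hgap : i + 3 ≤ MN m i := MN_gap hm2 hm6 hi
    have hK := (KEY i (MN m i) (by omega) (by omega)).mpr (Or.inr ⟨hi, rfl⟩)
    rcases hK with hle | hmatch
    · exfalso
      have spec : ∀ j', i < j' → j' < MN m i → (Φ j' < n ∧ Ψ j' = MN n (Φ j')) := by
        intro j' hj1 hj2
        have hne : ¬ (j' ≤ i ∨ (i < m ∧ j' = MN m i)) := by omega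
        have hΦgt : Φ i < Ψ j' := by
          rcases Nat.lt_or_ge (Φ i) (Ψ j') with h | h
          · exact h
          · exact absurd ((KEY i j' (by omega) (by omega)).mp (Or.inl h)) hne
        have hself := (KEY j' j' (by omega) (by omega)).mpr (Or.inl le_rfl)
        rcases hself with h' | h'
        · exfalso
          have hne2 : ¬ (MN m i ≤ j' ∨ (j' < m ∧ MN m i = MN m j')) := by
            rintro (h | ⟨hj'm, heq⟩)
            · omega
            · have := MN_inj hm2 hm6 hi hj'm heq; omega
          exact hne2 ((KEY j' (MN m i) (by omega) (by omega)).mp (Or.inl (by omega)))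
        · exact ⟨h'.1, h'.2⟩
      obtain ⟨hs1n, hs1⟩ := spec (i+1) (by omega) (by omega)
      obtain ⟨hs2n, hs2⟩ := spec (i+2) (by omega) (by omega)
      have h12 := (KEY (i+2) (i+1) (by omega) (by omega)).mpr (Or.inl (by omega))
      rcases h12 with h' | ⟨_, h'⟩
      · have := MN_ge hn2 hn6 hs1n
        omega
      · have heq : Ψ (i+1) = Ψ (i+2) := by rw [h', ← hs2]
        have := hΨinj _ _ (by omega) (by omega) heq; omega
    · exact hmatch
  -- C2 : no special vertices
  have C2 : ∀ i, i < 2*m → Ψ i ≤ Φ i := by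
    intro i hi
    have h := (KEY i i hi hi).mpr (Or.inl le_rfl)
    rcases h with h | ⟨hin, heq⟩
    · exact h
    · exfalso
      rcases Nat.lt_or_ge i m with him | him
      · obtain ⟨_, hC⟩ := C1 i him
        have h2 : Ψ (MN m i) = Ψ i := by rw [hC, ← heq]
        have := hΨinj _ _ (by have := MN_lt (n := m) (x := i) hm6; omega) hi h2
        have := MN_gap hm2 hm6 him
        omega
      · obtain ⟨i0, hi0m, hi0⟩ := MN_surj hm2 hm6 him hi
        obtain ⟨hi0n, hC⟩ := C1 i0 hi0m
        have hMNeq : MN n (Φ i0) = MN n (Φ i) := by rw [← hC, hi0, heq]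
        have := MN_inj hn2 hn6 hi0n hin hMNeq
        have := hΦinj _ _ (by omega) hi this
        omega
  -- C3 : Ψ strictly increasing
  have C3 : ∀ j j', j < j' → j' < 2*m → Ψ j < Ψ j' := by
    intro j j' hjj hj'
    by_cases hc : j < m ∧ j' = MN m j
    · obtain ⟨hjm, hj'eq⟩ := hc
      obtain ⟨hjn, hC⟩ := C1 j hjm
      have h1 := MN_ge hn2 hn6 hjn
      have h2 := C2 j (by omega)
      rw [hj'eq, hC]; omega
    · have hne : ¬ (j' ≤ j ∨ (j < m ∧ j' = MN m j)) := by
        rintro (h | h)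
        · omega
        · exact hc h
      have hgt : Φ j < Ψ j' := by
        rcases Nat.lt_or_ge (Φ j) (Ψ j') with h | h
        · exact h
        · exact absurd ((KEY j j' (by omega) (by omega)).mp (Or.inl h)) hne
      have := C2 j (by omega); omega
  -- C4 : Φ strictly increasing
  have C4 : ∀ i i', i < i' → i' < 2*m → Φ i < Φ i' := by
    intro i i' hii hi'
    by_cases hc : i < m ∧ i' = MN m i
    · obtain ⟨him, hi'eq⟩ := hc
      have hgap := MN_gap hm2 hm6 him
      have hlow : ∀ j0, i < j0 → j0 < MN m i → j0 < 2*m → Ψ j0 ≤ Φ (MN m i) → Φ i < Φ (MN m i) := by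
        intro j0 h1 h2 h3 h4
        have hne : ¬ (j0 ≤ i ∨ (i < m ∧ j0 = MN m i)) := by omega
        have : Φ i < Ψ j0 := by
          rcases Nat.lt_or_ge (Φ i) (Ψ j0) with h | h
          · exact h
          · exact absurd ((KEY i j0 (by omega) (by omega)).mp (Or.inl h)) hne
        omega
      subst hi'eq
      have hKa := (KEY (MN m i) (i+1) (by omega) (by omega)).mpr (Or.inl (by omega))
      have hKb := (KEY (MN m i) (i+2) (by omega) (by omega)).mpr (Or.inl (by omega))
      rcases hKa with ha | ⟨_, ha⟩
      · exact hlow (i+1) (by omega) (by omega) (by omega) ha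
      · rcases hKb with hb | ⟨_, hb⟩
        · exact hlow (i+2) (by omega) (by omega) (by omega) hb
        · exfalso
          have heq : Ψ (i+1) = Ψ (i+2) := by rw [ha, ← hb]
          have := hΨinj _ _ (by omega) (by omega) heq; omega
    · have hne : ¬ (i' ≤ i ∨ (i < m ∧ i' = MN m i)) := by
        rintro (h | h)
        · omega
        · exact hc h
      have hgt : Φ i < Ψ i' := by
        rcases Nat.lt_or_ge (Φ i) (Ψ i') with h | h
        · exact h
        · exact absurd ((KEY i i' (by omega) (by omega)).mp (Or.inl h)) hne
      have := C2 i' (by omega); omega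
  -- the pattern functions
  set β : ℕ → ℕ := fun t => 2*n - 1 - Ψ (2*m - 1 - t) with hβdef
  have hβmono : ∀ t t', t < t' → t' < m → β t < β t' := by
    intro t t' h1 h2
    have h3 : Ψ (2*m-1-t') < Ψ (2*m-1-t) := C3 _ _ (by omega) (by omega)
    have h4 := hΨb (2*m-1-t) (by omega)
    simp only [hβdef]; omega
  have hβlt : ∀ t, t < m → β t < n := by
    intro t ht
    obtain ⟨i0, hi0m, hi0⟩ := MN_surj hm2 hm6 (show m ≤ 2*m-1-t by omega) (by omega)
    obtain ⟨hi0n, hC⟩ := C1 i0 hi0m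
    have h1 : Ψ (2*m-1-t) = MN n (Φ i0) := by rw [← hi0, hC]
    have h2 := MN_ge hn2 hn6 hi0n
    simp only [hβdef]; omega
  have hpat : ∀ i, i < m → piN n (Φ i) = β (piN m i) := by
    intro i hi
    obtain ⟨hin, hC⟩ := C1 i hi
    have h1 : MN m i = 2*m - 1 - piN m i := rfl
    have h2 : MN n (Φ i) = 2*n - 1 - piN n (Φ i) := rfl
    have h3 := piN_lt hn2 hn6 hin
    have h4 := piN_lt hm2 hm6 hi
    simp only [hβdef]
    rw [← h1, hC, h2]
    omega
  -- sigma values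
  have hσ0 : piN m 0 = 3 := by rw [piN_even (by omega) (by omega) (by omega)]
  have hσ1 : piN m 1 = 1 := piN_one
  have hσ3 : piN m 3 = 0 := by rw [piN_odd (by omega) (by omega) (by omega)]
  have hσm4 : piN m (m-4) = m-1 := by rw [piN_even (by omega) (by omega) (by omega)]; omega
  have hσm2 : piN m (m-2) = m-2 := piN_top hm6
  have hσm1 : piN m (m-1) = m-4 := by rw [piN_odd (by omega) (by omega) (by omega)]; omega
  -- anchors
  have hanch1 : Φ 1 = 1 ∨ Φ 1 = n-2 := by
    apply piN_anchor hn2 hn6 (C4 0 1 (by omega) (by omega)) (C4 1 3 (by omega) (by omega))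
      (C1 3 (by omega)).1
    · rw [hpat 1 (by omega), hpat 0 (by omega), hσ1, hσ0]
      exact hβmono 1 3 (by omega) (by omega)
    · rw [hpat 3 (by omega), hpat 1 (by omega), hσ3, hσ1]
      exact hβmono 0 1 (by omega) (by omega)
  have hanch2 : Φ (m-2) = 1 ∨ Φ (m-2) = n-2 := by
    apply piN_anchor hn2 hn6 (C4 (m-4) (m-2) (by omega) (by omega))
      (C4 (m-2) (m-1) (by omega) (by omega)) (C1 (m-1) (by omega)).1
    · rw [hpat (m-2) (by omega), hpat (m-4) (by omega), hσm2, hσm4]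
      exact hβmono (m-2) (m-1) (by omega) (by omega)
    · rw [hpat (m-1) (by omega), hpat (m-2) (by omega), hσm1, hσm2]
      exact hβmono (m-4) (m-2) (by omega) (by omega)
  have hord : Φ 1 < Φ (m-2) := C4 1 (m-2) (by omega) (by omega)
  have hα1 : Φ 1 = 1 := by omega
  have hαm2 : Φ (m-2) = n-2 := by omega
  -- initial values
  have hβ1 : β 1 = 1 := by
    have := hpat 1 (by omega)
    rw [hσ1, hα1, piN_one] at this; omega
  have hα0 : Φ 0 = 0 := by have := C4 0 1 (by omega) (by omega); omega
  have hβ3 : β 3 = 3 := by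
    have := hpat 0 (by omega)
    rw [hσ0, hα0, piN_even (n := n) (by omega) (by omega) (by omega)] at this; omega
  have hβ0 : β 0 = 0 := by have := hβmono 0 1 (by omega) (by omega); omega
  -- induction
  have IND : ∀ t, 2*t + 4 ≤ m →
      (Φ (2*t) = 2*t ∧ Φ (2*t+1) = 2*t+1 ∧ β (2*t) = 2*t ∧ β (2*t+1) = 2*t+1) := by
    intro t
    induction t with
    | zero => intro _; exact ⟨hα0, hα1, hβ0, hβ1⟩
    | succ t ih =>
      intro ht
      obtain ⟨hP1, hP2, hP3, hP4⟩ := ih (by omega)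
      set q := 2*t with hq
      have hq6 : q + 6 ≤ m := by omega
      have hβq3 : β (q+3) = q+3 := by
        have h := hpat q (by omega)
        rw [hP1, piN_even (n := m) (q := q) (by omega) (by omega) (by omega),
          piN_even (n := n) (q := q) (by omega) (by omega) (by omega)] at h
        omega
      have hβq2 : β (q+2) = q+2 := by
        have h1 := hβmono (q+1) (q+2) (by omega) (by omega)
        have h2 := hβmono (q+2) (q+3) (by omega) (by omega)
        omega
      have hαq3 : Φ (q+3) = q+3 := by
        have h := hpat (q+3) (by omega)
        rw [piN_odd (n := m) (by omega) (by omega) (by omega), Nat.add_sub_cancel] at h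
        have h2 : piN n (Φ (q+3)) = q := by omega
        have h3 := piN_invol hn2 hn6 (C1 (q+3) (by omega)).1
        rw [h2] at h3
        rw [← h3, piN_even (n := n) (by omega) (by omega) (by omega)]
      have hαq2 : Φ (q+2) = q+2 := by
        have h1 := C4 (q+1) (q+2) (by omega) (by omega)
        have h2 := C4 (q+2) (q+3) (by omega) (by omega)
        omega
      refine ⟨?_, ?_, ?_, ?_⟩
      · show Φ (2*(t+1)) = _
        rw [show 2*(t+1) = q+2 by omega]; rw [hαq2]
      · rw [show 2*(t+1)+1 = q+3 by omega]; rw [hαq3]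
      · rw [show 2*(t+1) = q+2 by omega]; rw [hβq2]
      · rw [show 2*(t+1)+1 = q+3 by omega]; rw [hβq3]
  have h24 : 2*((m-4)/2) = m-4 := by omega
  obtain ⟨hT1, _, _, _⟩ := IND ((m-4)/2) (by omega)
  rw [h24] at hT1
  -- final contradiction
  have hβm1 : β (m-1) = m-1 := by
    have h := hpat (m-4) (by omega)
    rw [hσm4, hT1, piN_even (n := n) (by omega) (by omega) (by omega)] at h
    omega
  have hβm2 : β (m-2) = n-2 := by
    have h := hpat (m-2) (by omega)
    rw [hσm2, hαm2, piN_top hn6] at h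
    omega
  have := hβmono (m-2) (m-1) (by omega) (by omega)
  omega

lemma MN_reflect {n u v : ℕ} (hn2 : n % 2 = 0) (hn6 : 6 ≤ n) (hu : u < 2*n) (hv : v < 2*n) :
    (v < n ∧ u = MN n v) ↔ (2*n-1-u < n ∧ 2*n-1-v = MN n (2*n-1-u)) := by
  constructor
  · rintro ⟨h1, rfl⟩
    have hp := piN_lt hn2 hn6 h1
    have e : 2*n-1-MN n v = piN n v := by simp only [MN]; omega
    rw [e]
    refine ⟨hp, ?_⟩
    simp only [MN]
    rw [piN_invol hn2 hn6 h1]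
  · rintro ⟨h1, h2⟩
    have hp := piN_lt hn2 hn6 h1
    have hv' : v = piN n (2*n-1-u) := by simp only [MN] at h2; omega
    constructor
    · omega
    · rw [hv']
      simp only [MN]
      rw [piN_invol hn2 hn6 (by omega)]
      omega

/-- The T-graphs `T_{π*_6}, T_{π*_8}, T_{π*_10}, …` form an
infinite antichain for the induced subgraph relation: for all even `m, n` with
`6 ≤ m < n`, `T_{π*_m}` is not isomorphic to an induced subgraph of `T_{π*_n}`. -/
theorem Tgraph_pistar_antichain (m n : ℕ) (hme : Even m) (hne : Even n)
    (hm : 6 ≤ m) (hmn : m < n) :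
    ¬ IsInducedSubgraph (Tgraph (pistarFin m)) (Tgraph (pistarFin n)) := by
  rintro ⟨f, hfinj, hadj⟩
  have hm2 : m % 2 = 0 := Nat.even_iff.mp hme
  have hn2 : n % 2 = 0 := Nat.even_iff.mp hne
  have hn6 : 6 ≤ n := by omega
  have hm0 : 0 < m := by omega
  have hn0 : 0 < n := by omega
  have hside : ∀ u v : VT m, (Tgraph (pistarFin m)).Adj u v → sideV (f u) ≠ sideV (f v) :=
    fun u v h => adj_side ((hadj u v).mpr h)
  have hDadj : ∀ x, x < 2*m → (Tgraph (pistarFin m)).Adj (lV m hm0 x) (rV m hm0 0) := by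
    intro x hx
    rw [adj_lr hm2 hm hm0 hx (by omega)]
    left; omega
  have hCadj : ∀ y, y < 2*m → (Tgraph (pistarFin m)).Adj (lV m hm0 (2*m-1)) (rV m hm0 y) := by
    intro y hy
    rw [adj_lr hm2 hm hm0 (by omega) hy]
    left; omega
  have hboolne : ∀ a b : Bool, a ≠ b → a = !b := by decide
  set s0 : Bool := sideV (f (rV m hm0 0)) with hs0def
  have hL : ∀ x, x < 2*m → sideV (f (lV m hm0 x)) = !s0 := by
    intro x hx
    exact hboolne _ _ (hside _ _ (hDadj x hx))
  have hR : ∀ y, y < 2*m → sideV (f (rV m hm0 y)) = s0 := by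
    intro y hy
    have h1 := hside _ _ (hCadj y hy)
    have h2 := hL (2*m-1) (by omega)
    have h3 : sideV (f (rV m hm0 y)) ≠ !s0 := by
      rw [← h2]; exact fun hh => h1 hh.symm
    have h4 := hboolne _ _ h3
    rwa [Bool.not_not] at h4
  -- injectivity helper
  have hlVinj : ∀ x x', x < 2*m → x' < 2*m → lV m hm0 x = lV m hm0 x' → x = x' := by
    intro x x' hx hx' h
    have := congrArg posV h
    rwa [posV_lV hm0 hx, posV_lV hm0 hx'] at this
  have hrVinj : ∀ y y', y < 2*m → y' < 2*m → rV m hm0 y = rV m hm0 y' → y = y' := by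
    intro y y' hy hy' h
    have := congrArg posV h
    rwa [posV_rV hm0 hy, posV_rV hm0 hy'] at this
  cases hs0 : s0 with
  | true =>
    -- aligned case
    apply core hm2 hn2 hm hmn (fun i => posV (f (lV m hm0 i))) (fun j => posV (f (rV m hm0 j)))
    · intro j _; exact posV_lt hn0 _
    · intro i i' hi hi' h
      have e1 : f (lV m hm0 i) = lV n hn0 (posV (f (lV m hm0 i))) :=
        (lV_posV hn0 (by rw [hL i hi, hs0]; rfl)).symm
      have e2 : f (lV m hm0 i') = lV n hn0 (posV (f (lV m hm0 i'))) :=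
        (lV_posV hn0 (by rw [hL i' hi', hs0]; rfl)).symm
      exact hlVinj i i' hi hi' (hfinj (by rw [e1, e2, h]))
    · intro j j' hj hj' h
      have e1 : f (rV m hm0 j) = rV n hn0 (posV (f (rV m hm0 j))) :=
        (rV_posV hn0 (by rw [hR j hj, hs0])).symm
      have e2 : f (rV m hm0 j') = rV n hn0 (posV (f (rV m hm0 j'))) :=
        (rV_posV hn0 (by rw [hR j' hj', hs0])).symm
      exact hrVinj j j' hj hj' (hfinj (by rw [e1, e2, h]))
    · intro i j hi hj
      have hu : posV (f (lV m hm0 i)) < 2*n := posV_lt hn0 _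
      have hv : posV (f (rV m hm0 j)) < 2*n := posV_lt hn0 _
      have e1 : f (lV m hm0 i) = lV n hn0 (posV (f (lV m hm0 i))) :=
        (lV_posV hn0 (by rw [hL i hi, hs0]; rfl)).symm
      have e2 : f (rV m hm0 j) = rV n hn0 (posV (f (rV m hm0 j))) :=
        (rV_posV hn0 (by rw [hR j hj, hs0])).symm
      have h4 := adj_lr (n := n) hn2 hn6 hn0 hu hv
      have h5 := hadj (lV m hm0 i) (rV m hm0 j)
      rw [e1, e2] at h5
      exact h4.symm.trans (h5.trans (adj_lr hm2 hm hm0 hi hj))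
  | false =>
    -- swapped case
    apply core hm2 hn2 hm hmn (fun i => 2*n-1-posV (f (lV m hm0 i)))
      (fun j => 2*n-1-posV (f (rV m hm0 j)))
    · intro j _; omega
    · intro i i' hi hi' h
      have b1 : posV (f (lV m hm0 i)) < 2*n := posV_lt hn0 _
      have b2 : posV (f (lV m hm0 i')) < 2*n := posV_lt hn0 _
      have h' : posV (f (lV m hm0 i)) = posV (f (lV m hm0 i')) := by omega
      have e1 : f (lV m hm0 i) = rV n hn0 (posV (f (lV m hm0 i))) :=
        (rV_posV hn0 (by rw [hL i hi, hs0]; rfl)).symm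
      have e2 : f (lV m hm0 i') = rV n hn0 (posV (f (lV m hm0 i'))) :=
        (rV_posV hn0 (by rw [hL i' hi', hs0]; rfl)).symm
      exact hlVinj i i' hi hi' (hfinj (by rw [e1, e2, h']))
    · intro j j' hj hj' h
      have b1 : posV (f (rV m hm0 j)) < 2*n := posV_lt hn0 _
      have b2 : posV (f (rV m hm0 j')) < 2*n := posV_lt hn0 _
      have h' : posV (f (rV m hm0 j)) = posV (f (rV m hm0 j')) := by omega
      have e1 : f (rV m hm0 j) = lV n hn0 (posV (f (rV m hm0 j))) :=
        (lV_posV hn0 (by rw [hR j hj, hs0])).symm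
      have e2 : f (rV m hm0 j') = lV n hn0 (posV (f (rV m hm0 j'))) :=
        (lV_posV hn0 (by rw [hR j' hj', hs0])).symm
      exact hrVinj j j' hj hj' (hfinj (by rw [e1, e2, h']))
    · intro i j hi hj
      have hu : posV (f (lV m hm0 i)) < 2*n := posV_lt hn0 _
      have hv : posV (f (rV m hm0 j)) < 2*n := posV_lt hn0 _
      have e1 : f (lV m hm0 i) = rV n hn0 (posV (f (lV m hm0 i))) :=
        (rV_posV hn0 (by rw [hL i hi, hs0]; rfl)).symm
      have e2 : f (rV m hm0 j) = lV n hn0 (posV (f (rV m hm0 j))) :=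
        (lV_posV hn0 (by rw [hR j hj, hs0])).symm
      have h7 := MN_reflect (u := posV (f (lV m hm0 i))) (v := posV (f (rV m hm0 j)))
        hn2 hn6 hu hv
      have h4 := adj_lr (n := n) hn2 hn6 hn0 hv hu
      have h5 := hadj (lV m hm0 i) (rV m hm0 j)
      rw [e1, e2, SimpleGraph.adj_comm] at h5
      have h6 := h4.symm.trans (h5.trans (adj_lr hm2 hm hm0 hi hj))
      rw [← h6]
      omega
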